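/- Let p be a prime, n ≥ 1, Γ a complete set of representatives of ℤ^n/pℤ^n containing 0 with Γ' = Γ \ {0}, and Γ* a complete set of representatives of 2π((p^{-1}ℤ^n)/ℤ^n) containing 0. Let R : ℝ → ℂ be a smooth 1-D refinement mask with dilation p (R(0) = 1), and let m₁, m₂ be positive integers. Suppose R has m₁ accuracy (the k-th derivative of R vanishes at every point ξ with ξ ≡ 2πl/p (mod 2πℤ) for some l ∈ {1,…,p−1}, for all 0 ≤ k ≤ m₁ − 1) and m₂ flatness (the k-th derivative of 1 − R vanishes at 0 for all 0 ≤ k ≤ m₂ − 1). Then C_{n,p}[R] has accuracy at least min{m₁, m₂}: for every γ ∈ Γ* \ {0} and every multi-index μ ∈ ℕ^n with 0 ≤ |μ| ≤ min{m₁, m₂} − 1, the partial derivative D^μ C_{n,p}[R] vanishes at γ. -/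

import Mathlib

open scoped Real Classical

private lemma aux_count {p : ℕ} [NeZero p] (hp : p.Prime) {n : ℕ} (m : Fin n → ZMod p) (hm : m ≠ 0) :
    (Finset.univ.filter fun x : Fin n → ZMod p => ∑ i, m i * x i = 0).card = p ^ (n - 1) := by
  haveI : Fact p.Prime := ⟨hp⟩
  obtain ⟨i₀, hi₀⟩ := Function.ne_iff.mp hm
  have hn : 0 < n := i₀.pos
  set u : Fin n → ZMod p := fun i => if i = i₀ then (m i₀)⁻¹ else 0 with hu
  have hsu : ∑ i, m i * u i = 1 := by
    rw [Finset.sum_eq_single i₀]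
    · simp [hu, mul_inv_cancel₀ hi₀]
    · intro b _ hb; simp [hu, hb]
    · intro h; exact absurd (Finset.mem_univ i₀) h
  have hfib : ∀ c : ZMod p,
      (Finset.univ.filter fun x : Fin n → ZMod p => ∑ i, m i * x i = c).card
        = (Finset.univ.filter fun x : Fin n → ZMod p => ∑ i, m i * x i = 0).card := by
    intro c
    apply Finset.card_bij (fun x _ => x - c • u)
    · intro x hx
      simp only [Finset.mem_filter, Finset.mem_univ, true_and] at hx ⊢
      have e : ∑ i, m i * (x - c • u) i = (∑ i, m i * x i) - c * ∑ i, m i * u i := by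
        rw [Finset.mul_sum, ← Finset.sum_sub_distrib]
        refine Finset.sum_congr rfl fun i _ => ?_
        simp only [Pi.sub_apply, Pi.smul_apply, smul_eq_mul]
        ring
      rw [e, hx, hsu, mul_one, sub_self]
    · intro a _ b _ hab
      exact sub_left_inj.mp hab
    · intro y hy
      refine ⟨y + c • u, ?_, by rw [add_sub_cancel_right]⟩
      simp only [Finset.mem_filter, Finset.mem_univ, true_and] at hy ⊢
      have e : ∑ i, m i * (y + c • u) i = (∑ i, m i * y i) + c * ∑ i, m i * u i := by
        rw [Finset.mul_sum, ← Finset.sum_add_distrib]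
        refine Finset.sum_congr rfl fun i _ => ?_
        simp only [Pi.add_apply, Pi.smul_apply, smul_eq_mul]
        ring
      rw [e, hy, hsu, mul_one, zero_add]
  have htot : (Finset.univ : Finset (Fin n → ZMod p)).card
      = ∑ c : ZMod p, (Finset.univ.filter fun x : Fin n → ZMod p => ∑ i, m i * x i = c).card :=
    Finset.card_eq_sum_card_fiberwise (fun x _ => Finset.mem_univ _)
  have hcard : (Finset.univ : Finset (Fin n → ZMod p)).card = p ^ n := by
    rw [Finset.card_univ, Fintype.card_fun, ZMod.card, Fintype.card_fin]
  have hsum : ∑ c : ZMod p, (Finset.univ.filter fun x : Fin n → ZMod p => ∑ i, m i * x i = c).card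
      = p * (Finset.univ.filter fun x : Fin n → ZMod p => ∑ i, m i * x i = 0).card := by
    rw [Finset.sum_congr rfl (fun c _ => hfib c), Finset.sum_const, Finset.card_univ, ZMod.card,
      smul_eq_mul]
  have key : p * (Finset.univ.filter fun x : Fin n → ZMod p => ∑ i, m i * x i = 0).card
      = p * p ^ (n - 1) := by
    have hpow : p ^ n = p * p ^ (n - 1) := by
      conv_lhs => rw [← Nat.sub_add_cancel hn]
      rw [pow_succ, Nat.mul_comm]
    rw [← hsum, ← htot, hcard, hpow]
  exact Nat.eq_of_mul_eq_mul_left hp.pos key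

/-- **Accuracy of the prime coset sum (Lemma 3).**  If the smooth, `2π`-periodic 1-D
refinement mask `R` with dilation `p` has accuracy `m₁` (all derivatives of order
`≤ m₁ - 1` vanish at every point `≡ 2πl/p (mod 2πℤ)`, `l ∈ {1,…,p-1}`) and flatness `m₂`
(all derivatives of order `≤ m₂ - 1` of `1 - R` vanish at `0`), then `C_{n,p}[R]` has
accuracy at least `min m₁ m₂`: all (partial) derivatives of order `≤ min m₁ m₂ - 1` of
`C_{n,p}[R]` vanish at each `γ ∈ Γ* \ {0}`. -/
theorem primeCosetSum_accuracy
    (n : ℕ) (hn : 1 ≤ n) (p : ℕ) (hp : p.Prime)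
    (Γ : Finset (Fin n → ℤ)) (hΓ0 : (0 : Fin n → ℤ) ∈ Γ)
    (hΓ : ∀ k : Fin n → ℤ, ∃! ν : Fin n → ℤ,
      ν ∈ Γ ∧ ∃ m : Fin n → ℤ, k = ν + (p : ℤ) • m)
    (Γs : Finset (Fin n → ℝ)) (hΓs0 : (0 : Fin n → ℝ) ∈ Γs)
    (hΓsSub : ∀ γ ∈ Γs, ∃ m : Fin n → ℤ, γ = fun i => 2 * π / p * (m i : ℝ))
    (hΓsRep : ∀ m : Fin n → ℤ, ∃! γ : Fin n → ℝ, γ ∈ Γs ∧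
      ∃ l : Fin n → ℤ, (fun i => 2 * π / p * (m i : ℝ)) = γ + (fun i => 2 * π * (l i : ℝ)))
    (R : ℝ → ℂ) (hR0 : R 0 = 1)
    (hRsmooth : ∀ k : ℕ, ContDiff ℝ k R)
    (hRper : ∀ ξ : ℝ, R (ξ + 2 * π) = R ξ)
    (m₁ m₂ : ℕ) (hm₁ : 1 ≤ m₁) (hm₂ : 1 ≤ m₂)
    (hacc : ∀ k : ℕ, k ≤ m₁ - 1 → ∀ ξ : ℝ,
      (∃ l : ℕ, 1 ≤ l ∧ l ≤ p - 1 ∧ ∃ j : ℤ, ξ = 2 * π * l / p + 2 * π * j) →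
      iteratedDeriv k R ξ = 0)
    (hflat : ∀ k : ℕ, k ≤ m₂ - 1 → iteratedDeriv k (fun ξ : ℝ => 1 - R ξ) 0 = 0)
    (C : (Fin n → ℝ) → ℂ)
    (hC : ∀ ω : Fin n → ℝ, C ω = (1 / (((p : ℂ) - 1) * (p : ℂ) ^ (n - 1))) *
      (1 - (p : ℂ) ^ (n - 1) + ∑ ν ∈ Γ.erase 0, R (∑ i, ω i * (ν i : ℝ)))) :
    ∀ γ ∈ Γs, γ ≠ 0 → ∀ k : ℕ, k ≤ min m₁ m₂ - 1 →
      iteratedFDeriv ℝ k C γ = 0 := by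
  haveI : Fact p.Prime := ⟨hp⟩
  intro γ hγΓ hγ0 k hk
  obtain ⟨mv, hmv⟩ := hΓsSub γ hγΓ
  have hk1 : k ≤ m₁ - 1 := by omega
  have hk2 : k ≤ m₂ - 1 := by omega
  have hppos : (0 : ℝ) < p := by exact_mod_cast hp.pos
  have hpR : (p : ℝ) ≠ 0 := ne_of_gt hppos
  -- the residues of `mv` are not all zero
  have hmne : ¬ ∀ i, (p : ℤ) ∣ mv i := by
    intro h
    choose w hw using h
    apply hγ0
    obtain ⟨γ', hP', huniq⟩ := hΓsRep mv
    have e1 : γ = γ' := by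
      refine huniq γ ⟨hγΓ, 0, ?_⟩
      funext i
      simp [hmv]
    have e2 : (0 : Fin n → ℝ) = γ' := by
      refine huniq 0 ⟨hΓs0, w, ?_⟩
      funext i
      simp only [Pi.add_apply, Pi.zero_apply, zero_add]
      rw [hw i]
      push_cast
      field_simp
    rw [e1, ← e2]
  -- dot products
  have hdot : ∀ ν : Fin n → ℤ,
      (∑ i, γ i * (ν i : ℝ)) = 2 * π / p * ((∑ i, mv i * ν i : ℤ) : ℝ) := by
    intro ν
    rw [hmv]
    push_cast
    rw [Finset.mul_sum]
    exact Finset.sum_congr rfl fun i _ => by ring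
  -- periodicity of iterated derivatives
  have hper : ∀ j : ℕ, Function.Periodic (iteratedDeriv j R) (2 * π) := by
    intro j x
    have h1 : (fun z => R (z + 2 * π)) = R := funext hRper
    calc iteratedDeriv j R (x + 2 * π)
        = iteratedDeriv j (fun z => R (z + 2 * π)) x :=
          (congrFun (iteratedDeriv_comp_add_const j R (2 * π)) x).symm
      _ = iteratedDeriv j R x := by rw [h1]
  -- flatness consequence
  have hR0deriv : ∀ j : ℕ, 1 ≤ j → j ≤ m₂ - 1 → iteratedDeriv j R 0 = 0 := by
    intro j h1 h2
    have h3 := hflat j h2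
    have h4 : iteratedDeriv j (fun ξ : ℝ => 1 - R ξ) 0 = - iteratedDeriv j R 0 := by
      rw [iteratedDeriv_const_sub h1, iteratedDeriv_neg]
    rw [h4] at h3
    exact neg_eq_zero.mp h3
  -- decomposition of non-divisible points
  have hpoint : ∀ s : ℤ, ¬ (p : ℤ) ∣ s →
      (∃ l : ℕ, 1 ≤ l ∧ l ≤ p - 1 ∧ ∃ j : ℤ, 2 * π / p * (s : ℝ) = 2 * π * l / p + 2 * π * j) := by
    intro s hdvd
    have h1 : 0 < s % p := by
      rcases lt_or_eq_of_le (Int.emod_nonneg s (by exact_mod_cast hp.pos.ne' : (p:ℤ) ≠ 0)) with h | h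
      · exact h
      · exact absurd (Int.dvd_of_emod_eq_zero h.symm) hdvd
    have h2 : s % p < p := Int.emod_lt_of_pos s (by exact_mod_cast hp.pos)
    refine ⟨(s % p).toNat, by omega, by omega, s / p, ?_⟩
    have hs : (p : ℤ) * (s / p) + s % p = s := Int.mul_ediv_add_emod s p
    have hsr : (s : ℝ) = p * ((s / p : ℤ) : ℝ) + (((s % p).toNat : ℕ) : ℝ) := by
      have h4 : (((s % (p:ℤ)).toNat : ℕ) : ℝ) = ((s % (p:ℤ) : ℤ) : ℝ) := by
        exact_mod_cast Int.toNat_of_nonneg (le_of_lt h1)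
      rw [h4]
      exact_mod_cast hs.symm
    rw [hsr]
    field_simp
    ring
  -- value of R at the lattice dot products
  have hval : ∀ ν : Fin n → ℤ, R (2 * π / p * ((∑ i, mv i * ν i : ℤ) : ℝ))
      = if (p : ℤ) ∣ (∑ i, mv i * ν i) then 1 else 0 := by
    intro ν
    set s : ℤ := ∑ i, mv i * ν i with hs
    by_cases hdvd : (p : ℤ) ∣ s
    · obtain ⟨j, hj⟩ := hdvd
      have he : 2 * π / p * (s : ℝ) = j * (2 * π) := by
        rw [hj]; push_cast; field_simp
      rw [if_pos ⟨j, hj⟩, he, Function.Periodic.int_mul_eq hRper j, hR0]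
    · rw [if_neg hdvd]
      have := hacc 0 (Nat.zero_le _) (2 * π / p * (s : ℝ)) (hpoint s hdvd)
      rwa [iteratedDeriv_zero] at this
  rcases Nat.eq_zero_or_pos k with rfl | hkpos
  · -- order 0 : the value of C at γ vanishes, by the counting argument
    have hmbar : (fun i => ((mv i : ℤ) : ZMod p)) ≠ (0 : Fin n → ZMod p) := by
      intro h
      apply hmne
      intro i
      exact (ZMod.intCast_zmod_eq_zero_iff_dvd _ _).mp (congrFun h i)
    have hcard : (Γ.filter fun ν => (p : ℤ) ∣ ∑ i, mv i * ν i).card = p ^ (n - 1) := by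
      rw [← aux_count hp _ hmbar]
      apply Finset.card_bij (fun ν _ => fun i => ((ν i : ℤ) : ZMod p))
      · intro ν hν
        simp only [Finset.mem_filter, Finset.mem_univ, true_and] at hν ⊢
        have h0 : ((∑ i, mv i * ν i : ℤ) : ZMod p) = 0 :=
          (ZMod.intCast_zmod_eq_zero_iff_dvd _ _).mpr hν.2
        rw [← h0]
        push_cast
        rfl
      · intro ν hν ν' hν' hee
        have hdvd : ∀ i, (p : ℤ) ∣ (ν' i - ν i) := by
          intro i
          refine (ZMod.intCast_zmod_eq_zero_iff_dvd _ _).mp ?_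
          push_cast
          rw [congrFun hee i]
          ring
        choose w hw using hdvd
        obtain ⟨ν₀, _, huniq⟩ := hΓ ν'
        have e1 : ν' = ν₀ := huniq ν' ⟨(Finset.mem_filter.mp hν').1, 0, by simp⟩
        have e2 : ν = ν₀ := by
          refine huniq ν ⟨(Finset.mem_filter.mp hν).1, w, ?_⟩
          funext i
          have := hw i
          simp only [Pi.add_apply, Pi.smul_apply, smul_eq_mul]
          omega
        rw [e2, ← e1]
      · intro x hx
        simp only [Finset.mem_filter, Finset.mem_univ, true_and] at hx
        obtain ⟨ν, ⟨hνΓ, w, hw⟩, _⟩ := hΓ (fun i => ((x i).val : ℤ))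
        have hcast : ∀ i, ((ν i : ℤ) : ZMod p) = x i := by
          intro i
          have hwi : ((x i).val : ℤ) = ν i + p * w i := by
            have := congrFun hw i
            simpa using this
          have : (ν i : ℤ) = ((x i).val : ℤ) - p * w i := by omega
          rw [this]
          push_cast
          simp [ZMod.natCast_val, ZMod.cast_id]
        refine ⟨ν, Finset.mem_filter.mpr ⟨hνΓ, ?_⟩, funext hcast⟩
        refine (ZMod.intCast_zmod_eq_zero_iff_dvd _ _).mp ?_
        rw [← hx]
        push_cast
        exact Finset.sum_congr rfl fun i _ => by rw [hcast i]
    have h0mem : (0 : Fin n → ℤ) ∈ Γ.filter fun ν => (p : ℤ) ∣ ∑ i, mv i * ν i :=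
      Finset.mem_filter.mpr ⟨hΓ0, by simp⟩
    have hcard' : ((Γ.erase 0).filter fun ν => (p : ℤ) ∣ ∑ i, mv i * ν i).card
        = p ^ (n - 1) - 1 := by
      rw [Finset.filter_erase, Finset.card_erase_of_mem h0mem, hcard]
    have hsum : ∑ ν ∈ Γ.erase 0, R (∑ i, γ i * (ν i : ℝ)) = ((p ^ (n - 1) - 1 : ℕ) : ℂ) := by
      calc ∑ ν ∈ Γ.erase 0, R (∑ i, γ i * (ν i : ℝ))
          = ∑ ν ∈ Γ.erase 0, (if (p : ℤ) ∣ ∑ i, mv i * ν i then (1 : ℂ) else 0) :=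
            Finset.sum_congr rfl fun ν _ => by rw [hdot ν, hval ν]
        _ = (((Γ.erase 0).filter fun ν => (p : ℤ) ∣ ∑ i, mv i * ν i).card : ℂ) :=
            by rw [Finset.sum_boole]
        _ = ((p ^ (n - 1) - 1 : ℕ) : ℂ) := by rw [hcard']
    have hCγ : C γ = 0 := by
      rw [hC, hsum, Nat.cast_sub (Nat.one_le_pow _ _ hp.pos)]
      push_cast
      ring
    ext m
    simp [iteratedFDeriv_zero_apply, hCγ]
  · -- higher order : every term has vanishing k-th derivative
    have hDk : ∀ ν : Fin n → ℤ,
        iteratedDeriv k R (2 * π / p * ((∑ i, mv i * ν i : ℤ) : ℝ)) = 0 := by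
      intro ν
      set s : ℤ := ∑ i, mv i * ν i with hs
      by_cases hdvd : (p : ℤ) ∣ s
      · obtain ⟨j, hj⟩ := hdvd
        have he : 2 * π / p * (s : ℝ) = j * (2 * π) := by
          rw [hj]; push_cast; field_simp
        rw [he, Function.Periodic.int_mul_eq (hper k) j]
        exact hR0deriv k hkpos hk2
      · exact hacc k hk1 _ (hpoint s hdvd)
    -- linear maps
    set L : (Fin n → ℤ) → ((Fin n → ℝ) →L[ℝ] ℝ) :=
      fun ν => ∑ i, ((ν i : ℝ)) • ContinuousLinearMap.proj i with hLdef
    have hL : ∀ (ν : Fin n → ℤ) (ω : Fin n → ℝ), L ν ω = ∑ i, ω i * (ν i : ℝ) := by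
      intro ν ω
      simp [hLdef, ContinuousLinearMap.sum_apply, mul_comm]
    have hterm : ∀ ν : Fin n → ℤ,
        (fun ω : Fin n → ℝ => R (∑ i, ω i * (ν i : ℝ))) = R ∘ (L ν) := by
      intro ν
      funext ω
      simp [Function.comp, hL ν ω]
    have hterm_smooth : ∀ ν : Fin n → ℤ,
        ContDiff ℝ k (fun ω : Fin n → ℝ => R (∑ i, ω i * (ν i : ℝ))) := by
      intro ν
      rw [hterm ν]
      exact (hRsmooth k).comp (L ν).contDiff
    set c : ℂ := 1 / (((p : ℂ) - 1) * (p : ℂ) ^ (n - 1)) with hc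
    set g : (Fin n → ℝ) → ℂ :=
      fun ω => (1 - (p : ℂ) ^ (n - 1)) + ∑ ν ∈ Γ.erase 0, R (∑ i, ω i * (ν i : ℝ)) with hg
    have hgsum_smooth : ContDiff ℝ k
        (fun ω : Fin n → ℝ => ∑ ν ∈ Γ.erase 0, R (∑ i, ω i * (ν i : ℝ))) :=
      ContDiff.sum fun ν _ => hterm_smooth ν
    have hgsmooth : ContDiff ℝ k g := contDiff_const.add hgsum_smooth
    have hCeq : C = c • g := by
      funext ω
      rw [hC ω]
      simp only [Pi.smul_apply, hg, hc, smul_eq_mul, add_assoc]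
    rw [hCeq]
    have h1 : iteratedFDeriv ℝ k (c • g) γ = c • iteratedFDeriv ℝ k g γ :=
      iteratedFDeriv_const_smul_apply hgsmooth.contDiffAt
    rw [h1]
    have h2 : iteratedFDeriv ℝ k g γ = 0 := by
      have h3 : iteratedFDeriv ℝ k g γ
          = iteratedFDeriv ℝ k (fun _ : Fin n → ℝ => (1 - (p : ℂ) ^ (n - 1))) γ
            + iteratedFDeriv ℝ k
              (fun ω : Fin n → ℝ => ∑ ν ∈ Γ.erase 0, R (∑ i, ω i * (ν i : ℝ))) γ :=
        iteratedFDeriv_add_apply contDiff_const.contDiffAt hgsum_smooth.contDiffAt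
      rw [h3, iteratedFDeriv_const_of_ne (Nat.pos_iff_ne_zero.mp hkpos)]
      simp only [Pi.zero_apply, zero_add]
      have h5 := congrFun (iteratedFDeriv_sum (𝕜 := ℝ)
        (f := fun (ν : Fin n → ℤ) (ω : Fin n → ℝ) => R (∑ i, ω i * (ν i : ℝ)))
        (u := Γ.erase 0) (i := k) (fun ν _ => hterm_smooth ν)) γ
      rw [h5, Finset.sum_apply]
      refine Finset.sum_eq_zero fun ν _ => ?_
      rw [hterm ν,
        (L ν).iteratedFDeriv_comp_right (hRsmooth k) γ le_rfl]
      have hz : iteratedFDeriv ℝ k R (L ν γ) = 0 := by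
        ext mm
        rw [iteratedFDeriv_apply_eq_iteratedDeriv_mul_prod]
        have he : L ν γ = 2 * π / p * ((∑ i, mv i * ν i : ℤ) : ℝ) := by
          rw [hL ν γ]; exact hdot ν
        rw [he, hDk ν]
        simp
      rw [hz]
      ext mm
      simp
    rw [h2, smul_zero]
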